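/- Let q be an odd prime power and n a power of 2 such that x^n + 1 = h'(x)·h''(x) over F_q with h', h'' distinct monic irreducible polynomials of degree n/2, each the reciprocal of the other. Let u ∈ F_q^{2n} be a nonzero vector of Hamming weight < n. Then the number of elements a of R = F_q[x]/(x^n + 1) such that u belongs to the code C_a is at most q^{n/2}. -/

import Mathlib

open Polynomial

/-- The `n × n` negacirculant matrix with first row `a`. -/
def negacirculantMatrix {F : Type*} [Ring F] {n : ℕ} (a : Fin n → F) :
    Matrix (Fin n) (Fin n) F :=
  Matrix.of fun i j => if (i : ℕ) ≤ (j : ℕ) then a (j - i) else - a (j - i)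

/-- The monic reciprocal polynomial of `h` (for `h` with `h 0 ≠ 0`). -/
noncomputable def recip {F : Type*} [Field F] (h : F[X]) : F[X] :=
  C (h.coeff 0)⁻¹ * h.reverse

noncomputable def psiAux {F : Type*} [Field F] (n : ℕ) (v : Fin n → F) : F[X] :=
  ∑ i : Fin n, C (v i) * X ^ (i : ℕ)

lemma psiAux_coeff {F : Type*} [Field F] {n : ℕ} (v : Fin n → F) (i : Fin n) :
    (psiAux n v).coeff (i : ℕ) = v i := by
  rw [psiAux, finset_sum_coeff]
  rw [Finset.sum_eq_single i]
  · simp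
  · intro b _ hb
    simp only [coeff_C_mul, coeff_X_pow]
    rw [if_neg (fun h => hb (Fin.ext h.symm))]
    simp
  · simp

lemma psiAux_injective {F : Type*} [Field F] {n : ℕ} :
    Function.Injective (psiAux (F := F) n) := by
  intro v w h
  funext i
  rw [← psiAux_coeff v i, ← psiAux_coeff w i, h]

lemma psiAux_natDegree_le {F : Type*} [Field F] {n : ℕ} (v : Fin n → F) :
    (psiAux n v).natDegree ≤ n - 1 := by
  refine natDegree_sum_le_of_forall_le _ _ (fun i _ => ?_)
  refine le_trans (natDegree_mul_le) ?_
  simp only [natDegree_C, natDegree_X_pow, zero_add]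
  omega

lemma psiAux_zero {F : Type*} [Field F] {n : ℕ} : psiAux (F := F) n 0 = 0 := by
  simp [psiAux]

lemma key_mul {F : Type*} [Field F] {n : ℕ} [NeZero n] (c a : Fin n → F) :
    Ideal.Quotient.mk (Ideal.span {(X : F[X]) ^ n + 1})
        (psiAux n (Matrix.vecMul c (negacirculantMatrix a)))
      = Ideal.Quotient.mk _ (psiAux n c) * Ideal.Quotient.mk _ (psiAux n a) := by
  set I := Ideal.span {(X : F[X]) ^ n + 1} with hI
  have hterm : ∀ k l : Fin n,
      Ideal.Quotient.mk I (C (c k * negacirculantMatrix a k (k + l)) * X ^ ((k + l : Fin n) : ℕ))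
        = Ideal.Quotient.mk I (C (c k) * C (a l) * X ^ ((k : ℕ) + (l : ℕ))) := by
    intro k l
    have hval : ((k + l : Fin n) : ℕ) = ((k : ℕ) + (l : ℕ)) % n := Fin.val_add k l
    have hA : negacirculantMatrix a k (k + l)
        = if (k : ℕ) ≤ ((k + l : Fin n) : ℕ) then a l else - a l := by
      simp [negacirculantMatrix, add_sub_cancel_left]
    by_cases h : (k : ℕ) + (l : ℕ) < n
    · have hv : ((k + l : Fin n) : ℕ) = (k : ℕ) + (l : ℕ) := by
        rw [hval, Nat.mod_eq_of_lt h]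
      rw [hA, hv, if_pos (Nat.le_add_right _ _), C_mul]
    · have hkn := k.isLt
      have hln := l.isLt
      have hv : ((k + l : Fin n) : ℕ) = (k : ℕ) + (l : ℕ) - n := by
        rw [hval, Nat.mod_eq_sub_mod (by omega), Nat.mod_eq_of_lt (by omega)]
      rw [hA, hv, if_neg (by omega)]
      rw [Ideal.Quotient.eq, hI, Ideal.mem_span_singleton]
      refine ⟨-(C (c k * a l) * X ^ ((k : ℕ) + (l : ℕ) - n)), ?_⟩
      have hx : (X : F[X]) ^ ((k : ℕ) + (l : ℕ))
          = X ^ ((k : ℕ) + (l : ℕ) - n) * X ^ n := by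
        rw [← pow_add]; congr 1; omega
      rw [hx]
      simp only [C_mul, map_neg, mul_neg]
      ring
  calc Ideal.Quotient.mk I (psiAux n (Matrix.vecMul c (negacirculantMatrix a)))
      = ∑ j : Fin n, ∑ k : Fin n,
          Ideal.Quotient.mk I (C (c k * negacirculantMatrix a k j) * X ^ (j : ℕ)) := by
        rw [psiAux, map_sum]
        refine Finset.sum_congr rfl (fun j _ => ?_)
        rw [show Matrix.vecMul c (negacirculantMatrix a) j
              = ∑ k, c k * negacirculantMatrix a k j by
            simp [Matrix.vecMul, dotProduct]]
        simp only [map_sum, Finset.sum_mul]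
    _ = ∑ k : Fin n, ∑ l : Fin n,
          Ideal.Quotient.mk I (C (c k * negacirculantMatrix a k (k + l))
            * X ^ ((k + l : Fin n) : ℕ)) := by
        rw [Finset.sum_comm]
        refine Finset.sum_congr rfl (fun k _ => ?_)
        exact (Equiv.sum_comp (Equiv.addLeft k) (fun j : Fin n =>
          Ideal.Quotient.mk I (C (c k * negacirculantMatrix a k j) * X ^ (j : ℕ)))).symm
    _ = ∑ k : Fin n, ∑ l : Fin n,
          Ideal.Quotient.mk I (C (c k) * C (a l) * X ^ ((k : ℕ) + (l : ℕ))) := by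
        exact Finset.sum_congr rfl (fun k _ => Finset.sum_congr rfl (fun l _ => hterm k l))
    _ = Ideal.Quotient.mk I (psiAux n c) * Ideal.Quotient.mk I (psiAux n a) := by
        rw [psiAux, psiAux, map_sum, map_sum, Finset.sum_mul]
        refine Finset.sum_congr rfl (fun k _ => ?_)
        rw [Finset.mul_sum]
        refine Finset.sum_congr rfl (fun l _ => ?_)
        rw [← map_mul (Ideal.Quotient.mk I)]
        refine congrArg (Ideal.Quotient.mk I) ?_
        rw [pow_add, mul_mul_mul_comm]

/-- Suppose `n` is a power of `2` and `x^n + 1 = h' · h''` over `F_q` with `h', h''`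
distinct monic irreducible polynomials of degree `n/2` that are reciprocals of each
other. If `u ∈ F_q^(2n)` is nonzero of Hamming weight `< n`, then the number of
`a ∈ R = F_q[x]/(x^n + 1)` (identified with first rows `a : Fin n → F_q`) such that
`u` lies in the double negacirculant code `C_a = {(c, c·a) : c ∈ R}` is at most
`q^(n/2)`. -/
theorem card_codes_through_low_weight_vector
    {q n : ℕ} (F : Type*) [Field F] [Fintype F] [DecidableEq F]
    (hcard : Fintype.card F = q) (hodd : Odd q) (hn : ∃ k : ℕ, n = 2 ^ k)
    (h' h'' : F[X]) (hne : h' ≠ h'') (hmon' : h'.Monic) (hmon'' : h''.Monic)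
    (hirr' : Irreducible h') (hirr'' : Irreducible h'')
    (hdeg' : h'.natDegree = n / 2) (hdeg'' : h''.natDegree = n / 2)
    (hrec : h'' = recip h')
    (hfact : (X ^ n + 1 : F[X]) = h' * h'')
    (u : Fin n ⊕ Fin n → F) (hu : u ≠ 0) (hwt : hammingNorm u < n) :
    Nat.card {a : Fin n → F //
        ∃ c : Fin n → F, u = Sum.elim c (Matrix.vecMul c (negacirculantMatrix a))}
      ≤ q ^ (n / 2) := by
  classical
  set S := {a : Fin n → F //
      ∃ c : Fin n → F, u = Sum.elim c (Matrix.vecMul c (negacirculantMatrix a))} with hSdef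
  by_cases hS : Nonempty S
  swap
  · haveI : IsEmpty S := not_nonempty_iff.1 hS
    simp [Nat.card_of_isEmpty]
  -- n ≠ 0
  rcases Nat.eq_zero_or_pos n with hn0 | hnpos
  · exfalso
    apply hu
    subst hn0
    funext x
    rcases x with i | i <;> exact i.elim0
  haveI : NeZero n := ⟨hnpos.ne'⟩
  obtain ⟨⟨a₀, c₀, hc₀⟩⟩ := hS
  set c : Fin n → F := fun i => u (Sum.inl i) with hc
  set w : Fin n → F := fun i => u (Sum.inr i) with hw
  have hc₀eq : c₀ = c := by
    funext i
    exact (congrFun hc₀ (Sum.inl i)).symm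
  have ha₀ : Matrix.vecMul c (negacirculantMatrix a₀) = w := by
    funext j
    rw [← hc₀eq]
    exact (congrFun hc₀ (Sum.inr j)).symm
  have hcne : c ≠ 0 := by
    intro h0
    rw [h0, Matrix.zero_vecMul] at ha₀
    apply hu
    funext x
    cases x with
    | inl i => exact congrFun h0 i
    | inr j => exact (congrFun ha₀ j).symm
  -- degree bookkeeping
  have hmulne : (h' * h'' : F[X]) ≠ 0 := mul_ne_zero hmon'.ne_zero hmon''.ne_zero
  have hdegsum : n / 2 + n / 2 = n := by
    have h1 : (X ^ n + 1 : F[X]).natDegree = n := by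
      rw [show (1 : F[X]) = C 1 from (map_one C).symm, natDegree_X_pow_add_C]
    have h2 : (h' * h'').natDegree = n / 2 + n / 2 := by
      rw [natDegree_mul hmon'.ne_zero hmon''.ne_zero, hdeg', hdeg'']
    rw [hfact, h2] at h1
    exact h1
  have hpsic : psiAux n c ≠ 0 := fun h => hcne (psiAux_injective (h.trans psiAux_zero.symm))
  have hnotboth : ¬ (h' ∣ psiAux n c ∧ h'' ∣ psiAux n c) := by
    rintro ⟨d1, d2⟩
    have hnd : ¬ h' ∣ h'' := by
      intro hd
      exact hne (eq_of_monic_of_associated hmon' hmon''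
        (hirr'.associated_of_dvd hirr'' hd))
    have hcop : IsCoprime h' h'' := hirr'.coprime_iff_not_dvd.2 hnd
    have hdd : h' * h'' ∣ psiAux n c := hcop.mul_dvd d1 d2
    have hle := Polynomial.natDegree_le_of_dvd hdd hpsic
    have hle2 := psiAux_natDegree_le c
    rw [natDegree_mul hmon'.ne_zero hmon''.ne_zero, hdeg', hdeg''] at hle
    omega
  obtain ⟨p, hpmon, hpirr, hpdeg, hpdvdXn, hpndvd⟩ :
      ∃ p : F[X], p.Monic ∧ Irreducible p ∧ p.natDegree = n / 2 ∧
        p ∣ (X ^ n + 1 : F[X]) ∧ ¬ p ∣ psiAux n c := by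
    by_cases h : h' ∣ psiAux n c
    · exact ⟨h'', hmon'', hirr'', hdeg'', hfact ▸ dvd_mul_left _ _,
        fun hd => hnotboth ⟨h, hd⟩⟩
    · exact ⟨h', hmon', hirr', hdeg', hfact ▸ dvd_mul_right _ _, h⟩
  -- each element of S gives a multiple of p
  have hked : ∀ a : S, p ∣ (psiAux n a.1 - psiAux n a₀) := by
    rintro ⟨a, ca, hca⟩
    have hcaeq : ca = c := by
      funext i; exact (congrFun hca (Sum.inl i)).symm
    have hva : Matrix.vecMul c (negacirculantMatrix a) = w := by
      funext j
      rw [← hcaeq]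
      exact (congrFun hca (Sum.inr j)).symm
    have h1 := key_mul (F := F) c a
    have h2 := key_mul (F := F) c a₀
    rw [hva] at h1
    rw [ha₀] at h2
    have h3 : Ideal.Quotient.mk (Ideal.span {(X : F[X]) ^ n + 1})
        (psiAux n c * (psiAux n a - psiAux n a₀)) = 0 := by
      rw [map_mul, map_sub, mul_sub, ← h1, ← h2, sub_self]
    rw [Ideal.Quotient.eq_zero_iff_mem, Ideal.mem_span_singleton] at h3
    have h4 : p ∣ psiAux n c * (psiAux n a - psiAux n a₀) := hpdvdXn.trans h3
    exact (hpirr.prime.dvd_or_dvd h4).resolve_left hpndvd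
  -- injection into coefficient vectors
  have hn2pos : 0 < n / 2 := by omega
  set f : S → (Fin (n / 2) → F) := fun a =>
    fun i => ((psiAux n a.1 - psiAux n a₀) /ₘ p).coeff (i : ℕ) with hf
  have hbdeg : ∀ a : S, ((psiAux n a.1 - psiAux n a₀) /ₘ p).natDegree < n / 2 := by
    intro a
    rw [natDegree_divByMonic _ hpmon, hpdeg]
    have h1 := psiAux_natDegree_le a.1
    have h2 := psiAux_natDegree_le (n := n) a₀
    have h3 := natDegree_sub_le (psiAux n a.1) (psiAux n a₀)
    omega
  have hrec' : ∀ a : S, p * ((psiAux n a.1 - psiAux n a₀) /ₘ p)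
      = psiAux n a.1 - psiAux n a₀ := by
    intro a
    have := modByMonic_add_div (psiAux n a.1 - psiAux n a₀) p
    rwa [(modByMonic_eq_zero_iff_dvd hpmon).2 (hked a), zero_add] at this
  have hfinj : Function.Injective f := by
    intro a b hab
    have hq : (psiAux n a.1 - psiAux n a₀) /ₘ p = (psiAux n b.1 - psiAux n a₀) /ₘ p := by
      ext m
      by_cases hm : m < n / 2
      · exact congrFun hab ⟨m, hm⟩
      · rw [coeff_eq_zero_of_natDegree_lt (lt_of_lt_of_le (hbdeg a) (by omega)),
          coeff_eq_zero_of_natDegree_lt (lt_of_lt_of_le (hbdeg b) (by omega))]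
    have : psiAux n a.1 - psiAux n a₀ = psiAux n b.1 - psiAux n a₀ := by
      rw [← hrec' a, ← hrec' b, hq]
    exact Subtype.ext (psiAux_injective (sub_left_inj.1 this))
  calc Nat.card S ≤ Nat.card (Fin (n / 2) → F) := Nat.card_le_card_of_injective f hfinj
    _ = q ^ (n / 2) := by
      rw [Nat.card_eq_fintype_card, Fintype.card_fun, hcard, Fintype.card_fin]
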